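/- Let M be a countable structure satisfying Hypothesis (H) and let H₁, H₂ ∈ GS(M). Then the following are equivalent: (1) H₁ is a normal subgroup of H₂ of finite index; (2) there is K ∈ A(M) and subgroups L₁ ⊴ L₂ ≤ Aut(K) such that Hᵢ = G_(K,Lᵢ) for i = 1,2. -/

import Mathlib

open FirstOrder

namespace Paper

variable (L : FirstOrder.Language) (M : Type*) [L.Structure M]

/-- The group of automorphisms of a first-order structure, with composition. -/
instance autGroup : Group (M ≃[L] M) where
  one := FirstOrder.Language.Equiv.refl L M
  mul f g := f.comp g
  inv := FirstOrder.Language.Equiv.symm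
  mul_assoc _ _ _ := rfl
  one_mul f := FirstOrder.Language.Equiv.ext fun a => by
    show (FirstOrder.Language.Equiv.refl L M).comp f a = f a; simp
  mul_one f := FirstOrder.Language.Equiv.ext fun a => by
    show f.comp (FirstOrder.Language.Equiv.refl L M) a = f a; simp
  inv_mul_cancel f := FirstOrder.Language.Equiv.ext fun a => by
    show f.symm.comp f a = FirstOrder.Language.Equiv.refl L M a; simp

@[simp] theorem aut_one_apply (a : M) : (1 : M ≃[L] M) a = a := by
  show FirstOrder.Language.Equiv.refl L M a = a; simp
@[simp] theorem aut_mul_apply (f g : M ≃[L] M) (a : M) : (f * g) a = f (g a) := rfl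
@[simp] theorem aut_inv_apply (f : M ≃[L] M) (a : M) : f⁻¹ a = f.symm a := rfl
@[simp] theorem aut_coe_mul (f g : M ≃[L] M) : ⇑(f * g) = ⇑f ∘ ⇑g := rfl

/-- The natural action of the automorphism group on the structure. -/
instance autAction : MulAction (M ≃[L] M) M where
  smul f a := f a
  one_smul _ := rfl
  mul_smul _ _ _ := rfl

@[simp] theorem aut_smul_def (f : M ≃[L] M) (a : M) : f • a = f a := rfl

/-- The topology of pointwise convergence on the automorphism group (the domain
being regarded as discrete). -/
instance autTopology : TopologicalSpace (M ≃[L] M) :=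
  letI : TopologicalSpace M := ⊥
  TopologicalSpace.induced (fun g => (g : M → M)) Pi.topologicalSpace

/-- The pointwise stabilizer `G_(A)` of a set `A ⊆ M` in `Aut(M)`. -/
def pstab (A : Set M) : Subgroup (M ≃[L] M) where
  carrier := {g | ∀ a ∈ A, g a = a}
  one_mem' := fun _ _ => rfl
  mul_mem' := by
    intro f g hf hg a ha
    simp only [Set.mem_setOf_eq] at *
    rw [aut_mul_apply, hg a ha, hf a ha]
  inv_mem' := by
    intro f hf a ha
    simp only [Set.mem_setOf_eq] at *
    rw [aut_inv_apply]
    conv_lhs => rw [← hf a ha]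
    exact f.symm_apply_apply a

/-- The setwise stabilizer `G_{A}` of a set `A ⊆ M` in `Aut(M)`. -/
def sstab (A : Set M) : Subgroup (M ≃[L] M) where
  carrier := {g | g '' A = A}
  one_mem' := by
    simp only [Set.mem_setOf_eq]
    ext a; simp [Set.mem_image]
  mul_mem' := by
    intro f g hf hg
    simp only [Set.mem_setOf_eq] at *
    rw [aut_coe_mul, Set.image_comp, hg, hf]
  inv_mem' := by
    intro f hf
    simp only [Set.mem_setOf_eq] at *
    conv_lhs => rw [← hf]
    rw [Set.image_image]
    ext a; constructor
    · rintro ⟨x, hx, rfl⟩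
      simpa [f.symm_apply_apply] using hx
    · intro ha
      exact ⟨a, ha, f.symm_apply_apply a⟩

/-- The Galois-algebraic closure of `A ⊆ M`: the set of elements with finite orbit
under the pointwise stabilizer of `A`. -/
def aclg (A : Set M) : Set M :=
  {b | (MulAction.orbit (pstab L M A) b).Finite}

/-- The Galois-definable closure of the empty set: elements fixed by every automorphism. -/
def dclg0 : Set M := {b | ∀ g : M ≃[L] M, g b = b}

/-- `p : K ≃ K'` is an isomorphism between the induced substructures on `K` and `K'`. -/
def IsPartialIso (K K' : Set M) (p : K ≃ K') : Prop :=
  (∀ {n : ℕ} (f : L.Functions n) (x : Fin n → K),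
      ∃ h : FirstOrder.Language.Structure.funMap f (fun i => (x i : M)) ∈ K,
        (p ⟨FirstOrder.Language.Structure.funMap f (fun i => (x i : M)), h⟩ : M) =
          FirstOrder.Language.Structure.funMap f (fun i => (p (x i) : M))) ∧
  (∀ {n : ℕ} (r : L.Relations n) (x : Fin n → K),
      FirstOrder.Language.Structure.RelMap r (fun i => (x i : M)) ↔
        FirstOrder.Language.Structure.RelMap r (fun i => (p (x i) : M)))

/-- `A(M)`: the collection of Galois-algebraic closures of finite subsets of `M`. -/
def AA : Set (Set M) := {K | ∃ A : Set M, A.Finite ∧ K = aclg L M A}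

/-- Hypothesis (H). -/
structure HypH : Prop where
  countable : Countable M
  locallyFinite : ∀ A : Set M, A.Finite → (aclg L M A).Finite
  extendsIso : ∀ (K K' : Set M), K.Finite → K'.Finite →
    aclg L M K = K → aclg L M K' = K' → ∀ p : K ≃ K', IsPartialIso L M K K' p →
      ∃ g : M ≃[L] M, ∀ a : K, g a = (p a : M)
  openSandwich : ∀ H : Subgroup (M ≃[L] M), IsOpen (H : Set (M ≃[L] M)) →
    ∃! K : Set M, K.Finite ∧ aclg L M K = K ∧ pstab L M K ≤ H ∧ H ≤ sstab L M K


/-- Generalized pointwise stabilizer `G_(K,L)`. -/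
def genStab (K : Set M) (Lsub : Subgroup (Equiv.Perm K)) : Subgroup (M ≃[L] M) where
  carrier := {f | ∃ p ∈ Lsub, ∀ a : K, f a = (p a : M)}
  one_mem' := ⟨1, Lsub.one_mem, fun a => by simp⟩
  mul_mem' := by
    rintro f g ⟨p, hp, hfp⟩ ⟨q, hq, hgq⟩
    refine ⟨p * q, Lsub.mul_mem hp hq, fun a => ?_⟩
    rw [aut_mul_apply, hgq a, hfp (q a)]
    rfl
  inv_mem' := by
    rintro f ⟨p, hp, hfp⟩
    refine ⟨p⁻¹, Lsub.inv_mem hp, fun a => ?_⟩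
    have h1 : f ((p⁻¹ a : K) : M) = ((p (p⁻¹ a) : K) : M) := hfp _
    rw [show p (p⁻¹ a) = a from p.apply_symm_apply a] at h1
    rw [aut_inv_apply, ← h1, FirstOrder.Language.Equiv.symm_apply_apply]

/-- `GS(M)`: the collection of generalized pointwise stabilizers. -/
def GS : Set (Subgroup (M ≃[L] M)) :=
  {H | ∃ K ∈ AA L M, ∃ Lsub : Subgroup (Equiv.Perm K),
    (∀ p ∈ Lsub, IsPartialIso L M K K (p : K ≃ K)) ∧ H = genStab L M K Lsub}

/-- `PS(M)`: the collection of pointwise stabilizers of members of `A(M)`. -/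
def PS : Set (Subgroup (M ≃[L] M)) := {H | ∃ K ∈ AA L M, H = pstab L M K}

/-- The lattice `A₊(M)`. -/
def Aplus : Set (Set M) := AA L M ∪ {dclg0 L M}

/-- Covering relation in `S`. -/
def hasseCovers {α : Type*} (S : Set (Set α)) (A B : Set α) : Prop :=
  A ∈ S ∧ B ∈ S ∧ A ⊂ B ∧ ¬∃ C ∈ S, A ⊂ C ∧ C ⊂ B

/-- Adjacency in the Hasse diagram of `S`. -/
def hasseAdj {α : Type*} (S : Set (Set α)) (A B : Set α) : Prop :=
  hasseCovers S A B ∨ hasseCovers S B A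

/-- `A_k(M)`: members of `A(M)` distinct from `dcl(∅)` at distance `≤ k` from the bottom
of the lattice `A₊(M)` in its Hasse diagram. -/
def Ak (k : ℕ) : Set (Set M) :=
  {K | K ∈ AA L M ∧ K ≠ dclg0 L M ∧ ∃ (j : ℕ) (c : Fin (j + 1) → Set M), j ≤ k ∧
    c 0 = dclg0 L M ∧ c (Fin.last j) = K ∧
    ∀ i : Fin j, hasseAdj (Aplus L M) (c i.castSucc) (c i.succ)}

/-- `A_k(M)` for `k ≤ ω`, with `A_ω(M) = A(M)`. -/
def AkE (k : ℕ∞) : Set (Set M) :=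
  match k with
  | ⊤ => AA L M
  | (k : ℕ) => Ak L M k

/-- `k_M`: the supremum of lengths of strict chains of Galois-algebraic closures of
singletons. -/
noncomputable def kM : ℕ∞ :=
  ⨆ k ∈ {k : ℕ | ∃ a : Fin k → M, ∀ i j : Fin k, i < j → aclg L M {a i} ⊂ aclg L M {a j}},
    (k : ℕ∞)

/-- The domain of the expanded structure `E^ex_M(k)`: triples `(K, p, K')` with
`K, K' ∈ A_k(M)` and `p : K ≅ K'`. -/
structure ExTriple (k : ℕ∞) where
  K : Set M
  K' : Set M
  hK : K ∈ AkE L M k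
  hK' : K' ∈ AkE L M k
  p : K ≃ K'
  iso : IsPartialIso L M K K' p

/-- The unary predicate of `E^ex_M(k)` holding of the identity triples. -/
def IsIdTriple {k : ℕ∞} (t : ExTriple L M k) : Prop :=
  t.K = t.K' ∧ ∀ a : t.K, (t.p a : M) = (a : M)

/-- The `n`-ary relation `E_n` of `E^ex_M(k)`. -/
def ERel {k : ℕ∞} {n : ℕ} (x : Fin n → ExTriple L M k) : Prop :=
  ∃ g : M ≃[L] M, ∀ (i : Fin n) (a : (x i).K), g a = ((x i).p a : M)

/-- The binary relation `Dom` of `E^ex_M(k)`. -/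
def DomRel {k : ℕ∞} (t s : ExTriple L M k) : Prop := IsIdTriple L M s ∧ s.K = t.K

/-- The binary relation `Cod` of `E^ex_M(k)`. -/
def CodRel {k : ℕ∞} (t s : ExTriple L M k) : Prop := IsIdTriple L M s ∧ s.K = t.K'

variable {L M}

/-- A bijection between the domains of `E^ex_M(k)` and `E^ex_N(k)` is an isomorphism
if it preserves the identity-triple predicate, all the relations `E_n`, `Dom` and `Cod`. -/
def IsExIso {L' : FirstOrder.Language} {N : Type*} [L'.Structure N] {k : ℕ∞}
    (F : ExTriple L M k ≃ ExTriple L' N k) : Prop :=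
  (∀ t, IsIdTriple L M t ↔ IsIdTriple L' N (F t)) ∧
  (∀ (n : ℕ) (x : Fin n → ExTriple L M k), ERel L M x ↔ ERel L' N (F ∘ x)) ∧
  (∀ t s, DomRel L M t s ↔ DomRel L' N (F t) (F s)) ∧
  (∀ t s, CodRel L M t s ↔ CodRel L' N (F t) (F s))

variable (L M)

/-- The automorphism group of the expanded structure `E^ex_M(k)`. -/
def exAut (k : ℕ∞) : Subgroup (Equiv.Perm (ExTriple L M k)) where
  carrier := {σ | IsExIso (σ : ExTriple L M k ≃ ExTriple L M k)}
  one_mem' := by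
    refine ⟨fun t => ?_, fun n x => ?_, fun t s => ?_, fun t s => ?_⟩ <;>
      simp [Equiv.Perm.coe_one, Function.comp_def]
  mul_mem' := by
    rintro σ τ ⟨hσ1, hσ2, hσ3, hσ4⟩ ⟨hτ1, hτ2, hτ3, hτ4⟩
    refine ⟨fun t => ?_, fun n x => ?_, fun t s => ?_, fun t s => ?_⟩
    · exact (hτ1 t).trans (hσ1 (τ t))
    · exact (hτ2 n x).trans (hσ2 n (τ ∘ x))
    · exact (hτ3 t s).trans (hσ3 (τ t) (τ s))
    · exact (hτ4 t s).trans (hσ4 (τ t) (τ s))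
  inv_mem' := by
    rintro σ ⟨hσ1, hσ2, hσ3, hσ4⟩
    refine ⟨fun t => ?_, fun n x => ?_, fun t s => ?_, fun t s => ?_⟩
    · have := hσ1 (σ⁻¹ t); simpa using this.symm
    · have := hσ2 n (⇑(σ⁻¹) ∘ x)
      have hx : ⇑σ ∘ ⇑(σ⁻¹) ∘ x = x := by
        funext i; simp
      rw [hx] at this
      exact this.symm
    · have := hσ3 (σ⁻¹ t) (σ⁻¹ s); simpa using this.symm
    · have := hσ4 (σ⁻¹ t) (σ⁻¹ s); simpa using this.symm

/-- The subgroup of topological automorphisms of a topological group. -/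
def topMulAut (G : Type*) [Group G] [TopologicalSpace G] : Subgroup (MulAut G) where
  carrier := {α | Continuous (α : G → G) ∧ Continuous (α.symm : G → G)}
  one_mem' := ⟨continuous_id, continuous_id⟩
  mul_mem' := by
    rintro α β ⟨hα1, hα2⟩ ⟨hβ1, hβ2⟩
    exact ⟨hα1.comp hβ1, hβ2.comp hα2⟩
  inv_mem' := by
    rintro α ⟨h1, h2⟩
    exact ⟨h2, h1⟩

/-- A group isomorphism between topological groups which is a homeomorphism. -/
def IsTopIso {G H : Type*} [Group G] [Group H] [TopologicalSpace G] [TopologicalSpace H]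
    (e : G ≃* H) : Prop :=
  Continuous (e : G → H) ∧ Continuous (e.symm : H → G)

/-- The natural homomorphism from `Aut(M)` to the symmetric group on `M`. -/
def toPerm : (M ≃[L] M) →* Equiv.Perm M where
  toFun g := g.toEquiv
  map_one' := rfl
  map_mul' f g := Equiv.ext fun _ => rfl

/-- The orbit equivalence relation on `n`-tuples. -/
def orbRel (n : ℕ) (x y : Fin n → M) : Prop := ∃ g : M ≃[L] M, ∀ i, g (x i) = y i

/-- The automorphism group of the orbital structure `E_M`: permutations of `M`
preserving each orbit equivalence relation. -/
def autOrbital : Subgroup (Equiv.Perm M) where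
  carrier := {f | ∀ (n : ℕ) (x y : Fin n → M),
    orbRel L M n x y ↔ orbRel L M n (f ∘ x) (f ∘ y)}
  one_mem' := by intro n x y; simp [Equiv.Perm.coe_one]
  mul_mem' := by
    intro f g hf hg n x y
    exact (hg n x y).trans (hf n (g ∘ x) (g ∘ y))
  inv_mem' := by
    intro f hf n x y
    have := hf n (⇑(f⁻¹) ∘ x) (⇑(f⁻¹) ∘ y)
    have hx : ⇑f ∘ ⇑(f⁻¹) ∘ x = x := by funext i; simp
    have hy : ⇑f ∘ ⇑(f⁻¹) ∘ y = y := by funext i; simp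
    rw [hx, hy] at this
    exact this.symm

/-- `Aut°(E_M)`: automorphisms of the orbital structure preserving each orbit
equivalence class. -/
def autOrbitalFix : Subgroup (Equiv.Perm M) where
  carrier := {f | f ∈ autOrbital L M ∧ ∀ (n : ℕ) (x : Fin n → M), orbRel L M n x (f ∘ x)}
  one_mem' := ⟨(autOrbital L M).one_mem, fun n x => ⟨1, fun i => by simp [Equiv.Perm.coe_one]⟩⟩
  mul_mem' := by
    rintro f g ⟨hf, hf2⟩ ⟨hg, hg2⟩
    refine ⟨(autOrbital L M).mul_mem hf hg, fun n x => ?_⟩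
    obtain ⟨a, ha⟩ := hg2 n x
    obtain ⟨b, hb⟩ := hf2 n (g ∘ x)
    exact ⟨b * a, fun i => by rw [aut_mul_apply, ha i, hb i]; rfl⟩
  inv_mem' := by
    rintro f ⟨hf, hf2⟩
    refine ⟨(autOrbital L M).inv_mem hf, fun n x => ?_⟩
    obtain ⟨a, ha⟩ := hf2 n (⇑(f⁻¹) ∘ x)
    refine ⟨a⁻¹, fun i => ?_⟩
    have hi := ha i
    simp only [Function.comp_apply] at hi
    rw [show f (f⁻¹ (x i)) = x i from f.apply_symm_apply (x i)] at hi
    rw [← hi, aut_inv_apply, FirstOrder.Language.Equiv.symm_apply_apply]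
    rfl

/-- A homogeneous structure: isomorphisms between finite substructures extend to
automorphisms. -/
def Homogeneous : Prop :=
  ∀ (K K' : Set M), K.Finite → K'.Finite → ∀ p : K ≃ K',
    IsPartialIso L M K K' p → ∃ g : M ≃[L] M, ∀ a : K, g a = (p a : M)

/-- Weak elimination of imaginaries, phrased group-theoretically: every open subgroup is
sandwiched between the pointwise and setwise stabilizers of a unique smallest finite
Galois-algebraically closed set. -/
def HasWEI : Prop :=
  ∀ H : Subgroup (M ≃[L] M), IsOpen (H : Set (M ≃[L] M)) →
    ∃ K : Set M, (K.Finite ∧ aclg L M K = K ∧ pstab L M K ≤ H ∧ H ≤ sstab L M K) ∧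
      ∀ K' : Set M, (K'.Finite ∧ aclg L M K' = K' ∧ pstab L M K' ≤ H ∧ H ≤ sstab L M K') →
        K ⊆ K'

/-- No algebraicity: every finite set is Galois-algebraically closed. -/
def NoAlgebraicity : Prop := ∀ A : Set M, A.Finite → aclg L M A = A

/-- The small index property: every subgroup of index `< 2^ℵ₀` is open. -/
def SIP : Prop :=
  ∀ H : Subgroup (M ≃[L] M), Cardinal.mk ((M ≃[L] M) ⧸ H) < Cardinal.continuum →
    IsOpen (H : Set (M ≃[L] M))

/-- An oligomorphic action: finitely many orbits on `n`-tuples for every `n`. -/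
def Oligo (G : Type*) [Group G] (X : Type*) [MulAction G X] : Prop :=
  ∀ n : ℕ, Finite (MulAction.orbitRel.Quotient G (Fin n → X))

end Paper

namespace Paper

/-- ω-categoricity: `M` is, up to isomorphism, the unique countable model of its complete
first-order theory. -/
def IsOmegaCategorical (L : FirstOrder.Language) (M : Type w) [L.Structure M] : Prop :=
  Countable M ∧ ∀ (N : Type w) (iN : L.Structure N), Countable N → Nonempty N →
    (@FirstOrder.Language.Theory.Model L N iN (L.completeTheory M)) →
      Nonempty (@FirstOrder.Language.Equiv L N M iN _)


section Helpers

variable {L : FirstOrder.Language} {M : Type*} [L.Structure M]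

theorem pstab_mono {A B : Set M} (h : A ⊆ B) : pstab L M B ≤ pstab L M A :=
  fun _ hg a ha => hg a (h ha)

theorem orbit_mono_subgroup {H K : Subgroup (M ≃[L] M)} (h : H ≤ K) (b : M) :
    MulAction.orbit H b ⊆ MulAction.orbit K b := by
  rintro x ⟨g, rfl⟩
  exact ⟨⟨(g : M ≃[L] M), h g.2⟩, rfl⟩

theorem subset_aclg (A : Set M) : A ⊆ aclg L M A := by
  intro a ha
  have hsub : MulAction.orbit (pstab L M A) a ⊆ {a} := by
    rintro x ⟨g, rfl⟩
    exact g.2 a ha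
  exact Set.Finite.subset (Set.finite_singleton a) hsub

theorem smul_mem_aclg {A : Set M} {g : M ≃[L] M} (hg : g ∈ pstab L M A) {b : M}
    (hb : b ∈ aclg L M A) : g b ∈ aclg L M A := by
  have h1 : MulAction.orbit (pstab L M A) ((⟨g, hg⟩ : pstab L M A) • b)
      = MulAction.orbit (pstab L M A) b := MulAction.orbit_smul _ b
  show (MulAction.orbit (pstab L M A) (g b)).Finite
  have h2 : g b = (⟨g, hg⟩ : pstab L M A) • b := rfl
  rw [h2, h1]; exact hb

theorem aclg_idem (h : HypH L M) {A : Set M} (hA : A.Finite) :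
    aclg L M (aclg L M A) = aclg L M A := by
  apply Set.Subset.antisymm
  · intro b hb
    have hBfin : (aclg L M A).Finite := h.locallyFinite A hA
    haveI : Finite (aclg L M A) := hBfin.to_subtype
    show (MulAction.orbit (pstab L M A) b).Finite
    have hOfin : (MulAction.orbit (pstab L M (aclg L M A)) b).Finite := hb
    set T : ((aclg L M A) → (aclg L M A)) → Set M := fun π =>
      {y | ∃ g : M ≃[L] M, g ∈ pstab L M A ∧ y = g b ∧
        ∀ x : (aclg L M A), g x = (π x : M)} with hT
    have hsub : MulAction.orbit (pstab L M A) b ⊆ ⋃ π, T π := by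
      rintro y ⟨g, rfl⟩
      exact Set.mem_iUnion.2 ⟨fun x => ⟨(g : M ≃[L] M) x, smul_mem_aclg g.2 x.2⟩,
        (g : M ≃[L] M), g.2, rfl, fun x => rfl⟩
    refine Set.Finite.subset (Set.finite_iUnion fun π => ?_) hsub
    by_cases hne : (T π).Nonempty
    · obtain ⟨y₀, g₀, hg₀, hy₀, hres₀⟩ := hne
      refine Set.Finite.subset (hOfin.image (g₀ : M → M)) ?_
      rintro y ⟨g, hg, rfl, hres⟩
      have hmem : g₀⁻¹ * g ∈ pstab L M (aclg L M A) := by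
        intro x hx
        have h1 : g x = (π ⟨x, hx⟩ : M) := hres ⟨x, hx⟩
        have h2 : g₀ x = (π ⟨x, hx⟩ : M) := hres₀ ⟨x, hx⟩
        rw [aut_mul_apply, h1, ← h2, aut_inv_apply, g₀.symm_apply_apply]
      refine ⟨(g₀⁻¹ * g) b, ⟨⟨g₀⁻¹ * g, hmem⟩, rfl⟩, ?_⟩
      rw [aut_mul_apply, aut_inv_apply, g₀.apply_symm_apply]
    · rw [Set.not_nonempty_iff_eq_empty] at hne
      rw [hne]; exact Set.finite_empty
  · exact fun b hb =>
      Set.Finite.subset hb (orbit_mono_subgroup (pstab_mono (subset_aclg A)) b)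

theorem AA_finite (h : HypH L M) {K : Set M} (hK : K ∈ AA L M) : K.Finite := by
  obtain ⟨A, hA, rfl⟩ := hK; exact h.locallyFinite A hA

theorem AA_closed (h : HypH L M) {K : Set M} (hK : K ∈ AA L M) : aclg L M K = K := by
  obtain ⟨A, hA, rfl⟩ := hK; exact aclg_idem h hA

theorem pstab_le_genStab (K : Set M) (Lsub : Subgroup (Equiv.Perm K)) :
    pstab L M K ≤ genStab L M K Lsub :=
  fun g hg => ⟨1, Lsub.one_mem, fun a => by
    simp only [Equiv.Perm.coe_one, id_eq]; exact hg a a.2⟩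

theorem genStab_maps {K : Set M} {Lsub : Subgroup (Equiv.Perm K)} {g : M ≃[L] M}
    (hg : g ∈ genStab L M K Lsub) {a : M} (ha : a ∈ K) : g a ∈ K := by
  obtain ⟨p, _, hres⟩ := hg
  have := hres ⟨a, ha⟩
  rw [this]; exact (p ⟨a, ha⟩).2

theorem genStab_le_sstab (K : Set M) (Lsub : Subgroup (Equiv.Perm K)) :
    genStab L M K Lsub ≤ sstab L M K := by
  intro g hg
  have hginv := (genStab L M K Lsub).inv_mem hg
  show (g : M → M) '' K = K
  apply Set.Subset.antisymm
  · rintro _ ⟨a, ha, rfl⟩; exact genStab_maps hg ha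
  · intro a ha
    refine ⟨g⁻¹ a, genStab_maps hginv ha, ?_⟩
    show g (g⁻¹ a) = a
    rw [aut_inv_apply, g.apply_symm_apply]

theorem sstab_maps {K : Set M} {g : M ≃[L] M} (hg : g ∈ sstab L M K) {a : M}
    (ha : a ∈ K) : g a ∈ K := by
  have h1 : g a ∈ (g : M → M) '' K := ⟨a, ha, rfl⟩
  rwa [hg] at h1

theorem sstab_symm_maps {K : Set M} {g : M ≃[L] M} (hg : g ∈ sstab L M K) {a : M}
    (ha : a ∈ K) : g.symm a ∈ K := by
  rw [show K = (g : M → M) '' K from hg.symm] at ha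
  obtain ⟨x, hx, rfl⟩ := ha
  rwa [g.symm_apply_apply]

/-- Restriction of `g ∈ sstab K` to a permutation of `K`. -/
def resPerm {K : Set M} (g : sstab L M K) : Equiv.Perm K where
  toFun a := ⟨(g : M ≃[L] M) a, sstab_maps g.2 a.2⟩
  invFun a := ⟨(g : M ≃[L] M).symm a, sstab_symm_maps g.2 a.2⟩
  left_inv a := Subtype.ext ((g : M ≃[L] M).symm_apply_apply a)
  right_inv a := Subtype.ext ((g : M ≃[L] M).apply_symm_apply a)

@[simp] theorem resPerm_apply {K : Set M} (g : sstab L M K) (a : K) :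
    (resPerm g a : M) = (g : M ≃[L] M) a := rfl

/-- The restriction homomorphism. -/
def resHom (K : Set M) : (sstab L M K) →* Equiv.Perm K where
  toFun := resPerm
  map_one' := Equiv.ext fun a => Subtype.ext rfl
  map_mul' g h := Equiv.ext fun a => Subtype.ext rfl

@[simp] theorem resHom_apply {K : Set M} (g : sstab L M K) (a : K) :
    ((resHom K g) a : M) = (g : M ≃[L] M) a := rfl

theorem mem_sstab_of_agree {K : Set M} {g : M ≃[L] M} {p : Equiv.Perm K}
    (h : ∀ a : K, g a = (p a : M)) : g ∈ sstab L M K := by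
  show (g : M → M) '' K = K
  apply Set.Subset.antisymm
  · rintro _ ⟨a, ha, rfl⟩
    rw [h ⟨a, ha⟩]; exact (p ⟨a, ha⟩).2
  · intro a ha
    refine ⟨p.symm ⟨a, ha⟩, (p.symm ⟨a, ha⟩).2, ?_⟩
    rw [h (p.symm ⟨a, ha⟩), p.apply_symm_apply]

theorem resHom_eq {K : Set M} {p : Equiv.Perm K} (g : sstab L M K)
    (h : ∀ a : K, (g : M ≃[L] M) a = (p a : M)) : resHom K g = p :=
  Equiv.ext fun a => Subtype.ext (h a)

theorem mem_genStab_iff {K : Set M} {Lsub : Subgroup (Equiv.Perm K)} {g : M ≃[L] M} :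
    g ∈ genStab L M K Lsub ↔
      ∃ hg : g ∈ sstab L M K, resHom K ⟨g, hg⟩ ∈ Lsub := by
  constructor
  · rintro ⟨p, hp, hres⟩
    have hg := mem_sstab_of_agree hres
    exact ⟨hg, by rw [resHom_eq ⟨g, hg⟩ hres]; exact hp⟩
  · rintro ⟨hg, hp⟩
    exact ⟨resHom K ⟨g, hg⟩, hp, fun a => rfl⟩

theorem conj_mem_of_normal {G : Type*} [Group G] {H₁ H₂ : Subgroup G} (hle : H₁ ≤ H₂)
    (hnorm : (H₁.subgroupOf H₂).Normal) {y z : G} (hy : y ∈ H₁) (hz : z ∈ H₂) :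
    z * y * z⁻¹ ∈ H₁ := by
  have h' := hnorm.conj_mem ⟨y, hle hy⟩ (Subgroup.mem_subgroupOf.2 hy) ⟨z, hz⟩
  rw [Subgroup.mem_subgroupOf] at h'
  exact h'

theorem image_aclg_subset (g : M ≃[L] M) (A : Set M) :
    (g : M → M) '' aclg L M A ⊆ aclg L M ((g : M → M) '' A) := by
  rintro _ ⟨b, hb, rfl⟩
  show (MulAction.orbit (pstab L M ((g : M → M) '' A)) (g b)).Finite
  have hsub : MulAction.orbit (pstab L M ((g : M → M) '' A)) (g b) ⊆
      (g : M → M) '' MulAction.orbit (pstab L M A) b := by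
    rintro _ ⟨k, rfl⟩
    have hmem : g⁻¹ * (k : M ≃[L] M) * g ∈ pstab L M A := by
      intro a ha
      have h1 : (k : M ≃[L] M) (g a) = g a := k.2 (g a) ⟨a, ha, rfl⟩
      rw [aut_mul_apply, aut_mul_apply, h1, aut_inv_apply, g.symm_apply_apply]
    refine ⟨(g⁻¹ * (k : M ≃[L] M) * g) b, ⟨⟨g⁻¹ * (k : M ≃[L] M) * g, hmem⟩, rfl⟩, ?_⟩
    show g ((g⁻¹ * (k : M ≃[L] M) * g) b) = (k : M ≃[L] M) (g b)
    rw [aut_mul_apply, aut_mul_apply, aut_inv_apply, g.apply_symm_apply]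
  exact Set.Finite.subset (hb.image _) hsub

theorem aclg_image (g : M ≃[L] M) (A : Set M) :
    aclg L M ((g : M → M) '' A) = (g : M → M) '' aclg L M A := by
  apply Set.Subset.antisymm
  · have h1 := image_aclg_subset g⁻¹ ((g : M → M) '' A)
    have hgi : ((g⁻¹ : M ≃[L] M) : M → M) '' ((g : M → M) '' A) = A := by
      rw [← Set.image_comp]
      have he : (((g⁻¹ : M ≃[L] M) : M → M) ∘ (g : M → M)) = id := by
        funext x
        show g⁻¹ (g x) = x
        rw [aut_inv_apply, g.symm_apply_apply]
      rw [he, Set.image_id]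
    rw [hgi] at h1
    intro x hx
    have h2 : ((g⁻¹ : M ≃[L] M)) x ∈ aclg L M A := h1 ⟨x, hx, rfl⟩
    refine ⟨g⁻¹ x, h2, ?_⟩
    show g (g⁻¹ x) = x
    rw [aut_inv_apply, g.apply_symm_apply]
  · exact image_aclg_subset g A

theorem isOpen_pstab {K : Set M} (hK : K.Finite) :
    IsOpen ((pstab L M K : Set (M ≃[L] M))) := by
  letI : TopologicalSpace M := ⊥
  haveI : DiscreteTopology M := discreteTopology_bot M
  have h1 : IsOpen {f : M → M | ∀ a ∈ K, f a = a} := by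
    have he : {f : M → M | ∀ a ∈ K, f a = a} = ⋂ a ∈ K, (fun f : M → M => f a) ⁻¹' {a} := by
      ext f; simp
    rw [he]
    exact hK.isOpen_biInter fun a _ => (continuous_apply a).isOpen_preimage _ (isOpen_discrete _)
  have h2 : (pstab L M K : Set (M ≃[L] M)) =
      (fun g : M ≃[L] M => (g : M → M)) ⁻¹' {f : M → M | ∀ a ∈ K, f a = a} := rfl
  rw [h2]
  exact isOpen_induced h1

theorem isOpen_of_le {H₁ H₂ : Subgroup (M ≃[L] M)} (hle : H₁ ≤ H₂)
    (h : IsOpen (H₁ : Set (M ≃[L] M))) : IsOpen (H₂ : Set (M ≃[L] M)) := by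
  have hcont : ∀ h₀ : M ≃[L] M, Continuous (fun g : M ≃[L] M => h₀ * g) := by
    intro h₀
    letI : TopologicalSpace M := ⊥
    haveI : DiscreteTopology M := discreteTopology_bot M
    apply continuous_induced_rng.2
    apply continuous_pi
    intro a
    show Continuous fun g : M ≃[L] M => h₀ (g a)
    exact continuous_of_discreteTopology.comp ((continuous_apply a).comp continuous_induced_dom)
  have he : (H₂ : Set (M ≃[L] M)) =
      ⋃ h₀ : H₂, (fun g => ((h₀ : M ≃[L] M))⁻¹ * g) ⁻¹' (H₁ : Set (M ≃[L] M)) := by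
    ext g
    simp only [Set.mem_iUnion, Set.mem_preimage, SetLike.mem_coe]
    constructor
    · intro hg
      exact ⟨⟨g, hg⟩, show g⁻¹ * g ∈ H₁ by rw [inv_mul_cancel]; exact H₁.one_mem⟩
    · rintro ⟨h₀, hh⟩
      have h1 : (h₀ : M ≃[L] M) * ((h₀ : M ≃[L] M)⁻¹ * g) ∈ H₂ := H₂.mul_mem h₀.2 (hle hh)
      rwa [← mul_assoc, mul_inv_cancel, one_mul] at h1
  rw [he]
  exact isOpen_iUnion fun h₀ => h.preimage (hcont _)

theorem relindex_pstab_sstab_ne_zero {K : Set M} (hK : K.Finite) :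
    (pstab L M K).relIndex (sstab L M K) ≠ 0 := by
  haveI : Finite K := hK.to_subtype
  have hker : (pstab L M K).subgroupOf (sstab L M K) = (resHom (L := L) (M := M) K).ker := by
    ext g
    simp only [Subgroup.mem_subgroupOf, MonoidHom.mem_ker]
    constructor
    · intro hg
      exact Equiv.ext fun a => Subtype.ext (hg a a.2)
    · intro hg a ha
      have h1 := congrArg (fun q : Equiv.Perm K => ((q ⟨a, ha⟩ : K) : M)) hg
      simpa using h1
  show ((pstab L M K).subgroupOf (sstab L M K)).index ≠ 0
  rw [hker, Subgroup.index_ker]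
  have : Finite ((resHom (L := L) (M := M) K).range) := inferInstance
  exact Nat.card_ne_zero.2 ⟨⟨1, (resHom (L := L) (M := M) K).range.one_mem⟩, this⟩

theorem sstab_of_normal (h : HypH L M) {K₁ : Set M} (hfin : K₁.Finite)
    (hcl : aclg L M K₁ = K₁) {H₁ H₂ : Subgroup (M ≃[L] M)} (hle : H₁ ≤ H₂)
    (hnorm : (H₁.subgroupOf H₂).Normal)
    (hp : pstab L M K₁ ≤ H₁) (hs : H₁ ≤ sstab L M K₁) :
    H₂ ≤ sstab L M K₁ := by
  intro g hg
  have hopen : IsOpen (H₁ : Set (M ≃[L] M)) := isOpen_of_le hp (isOpen_pstab hfin)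
  obtain ⟨Kc, _, huniq⟩ := h.openSandwich H₁ hopen
  have e1 : K₁ = Kc := huniq K₁ ⟨hfin, hcl, hp, hs⟩
  have hfin' : ((g : M → M) '' K₁).Finite := hfin.image _
  have hcl' : aclg L M ((g : M → M) '' K₁) = (g : M → M) '' K₁ := by
    rw [aclg_image, hcl]
  have hp' : pstab L M ((g : M → M) '' K₁) ≤ H₁ := by
    intro x hx
    have hxc : g⁻¹ * x * g ∈ pstab L M K₁ := by
      intro a ha
      have h1 : x (g a) = g a := hx (g a) ⟨a, ha, rfl⟩
      rw [aut_mul_apply, aut_mul_apply, h1, aut_inv_apply, g.symm_apply_apply]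
    have h2 := conj_mem_of_normal hle hnorm (hp hxc) hg
    have e : g * (g⁻¹ * x * g) * g⁻¹ = x := by group
    rwa [e] at h2
  have hs' : H₁ ≤ sstab L M ((g : M → M) '' K₁) := by
    intro x hx
    have hxc : g⁻¹ * x * g ∈ H₁ := by
      have h2 := conj_mem_of_normal hle hnorm hx (H₂.inv_mem hg)
      have e : g⁻¹ * x * g⁻¹⁻¹ = g⁻¹ * x * g := by group
      rwa [e] at h2
    have himg : ((g⁻¹ * x * g : M ≃[L] M) : M → M) '' K₁ = K₁ := hs hxc
    show (x : M → M) '' ((g : M → M) '' K₁) = (g : M → M) '' K₁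
    calc (x : M → M) '' ((g : M → M) '' K₁)
        = (g : M → M) '' (((g⁻¹ * x * g : M ≃[L] M) : M → M) '' K₁) := by
          rw [← Set.image_comp, ← Set.image_comp]
          refine congrArg (fun f : M → M => f '' K₁) (funext fun a => ?_)
          show x (g a) = g ((g⁻¹ * x * g) a)
          rw [aut_mul_apply, aut_mul_apply, aut_inv_apply, g.apply_symm_apply]
      _ = (g : M → M) '' K₁ := by rw [himg]
  have e2 : (g : M → M) '' K₁ = Kc := huniq _ ⟨hfin', hcl', hp', hs'⟩
  show (g : M → M) '' K₁ = K₁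
  rw [e2, ← e1]

end Helpers

/-- Under Hypothesis (H), for `H₁, H₂ ∈ GS(M)`: `H₁` is a normal subgroup
of finite index of `H₂` iff they are generalized stabilizers `G_(K,L₁)`, `G_(K,L₂)` over the
same `K ∈ A(M)` with `L₁ ⊴ L₂ ≤ Aut(K)`. -/
theorem stmt_10 (L : FirstOrder.Language) (M : Type*) [L.Structure M] (h : HypH L M)
    (H₁ H₂ : Subgroup (M ≃[L] M)) (h₁ : H₁ ∈ GS L M) (h₂ : H₂ ∈ GS L M) :
    (H₁ ≤ H₂ ∧ (H₁.subgroupOf H₂).Normal ∧ H₁.relIndex H₂ ≠ 0) ↔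
    (∃ K ∈ AA L M, ∃ L₁ L₂ : Subgroup (Equiv.Perm K),
      (∀ p ∈ L₂, IsPartialIso L M K K (p : K ≃ K)) ∧ L₁ ≤ L₂ ∧
      (L₁.subgroupOf L₂).Normal ∧
      H₁ = genStab L M K L₁ ∧ H₂ = genStab L M K L₂) := by
  constructor
  · rintro ⟨hle, hnorm, -⟩
    obtain ⟨K₁, hK₁, L₁', hiso₁, hH₁⟩ := h₁
    obtain ⟨K₂, hK₂, L₂', hiso₂, hH₂⟩ := h₂
    have hfin₁ : K₁.Finite := AA_finite h hK₁
    have hcl₁ : aclg L M K₁ = K₁ := AA_closed h hK₁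
    have hfin₂ : K₂.Finite := AA_finite h hK₂
    have hcl₂ : aclg L M K₂ = K₂ := AA_closed h hK₂
    have hp₁ : pstab L M K₁ ≤ H₁ := by rw [hH₁]; exact pstab_le_genStab K₁ L₁'
    have hs₁ : H₁ ≤ sstab L M K₁ := by rw [hH₁]; exact genStab_le_sstab K₁ L₁'
    have hp₂ : pstab L M K₂ ≤ H₂ := by rw [hH₂]; exact pstab_le_genStab K₂ L₂'
    have hs₂ : H₂ ≤ sstab L M K₂ := by rw [hH₂]; exact genStab_le_sstab K₂ L₂'
    have hH₂s : H₂ ≤ sstab L M K₁ := sstab_of_normal h hfin₁ hcl₁ hle hnorm hp₁ hs₁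
    have hopen₂ : IsOpen (H₂ : Set (M ≃[L] M)) := isOpen_of_le hp₂ (isOpen_pstab hfin₂)
    obtain ⟨Kc, -, huniq⟩ := h.openSandwich H₂ hopen₂
    have e1 : K₂ = Kc := huniq K₂ ⟨hfin₂, hcl₂, hp₂, hs₂⟩
    have e2 : K₁ = Kc := huniq K₁ ⟨hfin₁, hcl₁, le_trans hp₁ hle, hH₂s⟩
    have eK : K₂ = K₁ := e1.trans e2.symm
    subst eK
    refine ⟨K₂, hK₂, Subgroup.map (resHom K₂) (H₁.subgroupOf (sstab L M K₂)), L₂',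
      hiso₂, ?_, ?_, ?_, hH₂⟩
    · rintro p ⟨x, hx, rfl⟩
      simp only [SetLike.mem_coe, Subgroup.mem_subgroupOf] at hx
      have hx2 : (x : M ≃[L] M) ∈ genStab L M K₂ L₂' := by rw [← hH₂]; exact hle hx
      obtain ⟨q, hq, hres⟩ := hx2
      rw [resHom_eq x hres]
      exact hq
    · constructor
      intro n hn p
      rw [Subgroup.mem_subgroupOf] at hn ⊢
      obtain ⟨x, hx, hxn⟩ := hn
      simp only [SetLike.mem_coe, Subgroup.mem_subgroupOf] at hx
      obtain ⟨g, hg⟩ := h.extendsIso K₂ K₂ hfin₂ hfin₂ hcl₂ hcl₂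
        ((p : Equiv.Perm K₂) : K₂ ≃ K₂) (hiso₂ (p : Equiv.Perm K₂) p.2)
      have hgs : g ∈ sstab L M K₂ := mem_sstab_of_agree hg
      have hg2 : g ∈ H₂ := by rw [hH₂]; exact ⟨(p : Equiv.Perm K₂), p.2, hg⟩
      have hcm : g * (x : M ≃[L] M) * g⁻¹ ∈ H₁ := conj_mem_of_normal hle hnorm hx hg2
      have hmem : (⟨g, hgs⟩ : sstab L M K₂) * x * (⟨g, hgs⟩ : sstab L M K₂)⁻¹ ∈
          H₁.subgroupOf (sstab L M K₂) := Subgroup.mem_subgroupOf.2 hcm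
      refine ⟨_, hmem, ?_⟩
      rw [map_mul, map_mul, map_inv, hxn, resHom_eq (⟨g, hgs⟩ : sstab L M K₂) hg]
      rfl
    · apply le_antisymm
      · intro x hx
        have hxs : x ∈ sstab L M K₂ := hs₁ hx
        exact ⟨resHom K₂ ⟨x, hxs⟩, ⟨⟨x, hxs⟩, Subgroup.mem_subgroupOf.2 hx, rfl⟩,
          fun a => rfl⟩
      · rintro x ⟨q, ⟨y, hy, rfl⟩, hres⟩
        simp only [SetLike.mem_coe, Subgroup.mem_subgroupOf] at hy
        have hxy : x * ((y : M ≃[L] M))⁻¹ ∈ pstab L M K₂ := by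
          intro a ha
          rw [aut_mul_apply, aut_inv_apply]
          have h1 : x ((y : M ≃[L] M).symm a) =
              (y : M ≃[L] M) ((y : M ≃[L] M).symm a) :=
            hres ⟨(y : M ≃[L] M).symm a, sstab_symm_maps y.2 ha⟩
          rw [h1]
          exact (y : M ≃[L] M).apply_symm_apply a
        have h2 := H₁.mul_mem (hp₁ hxy) hy
        rwa [inv_mul_cancel_right] at h2
  · rintro ⟨K, hKAA, L₁, L₂, hiso, hle12, hnorm12, rfl, rfl⟩
    have hfin : K.Finite := AA_finite h hKAA
    have hle : genStab L M K L₁ ≤ genStab L M K L₂ := by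
      rintro g ⟨q, hq, hres⟩; exact ⟨q, hle12 hq, hres⟩
    refine ⟨hle, ?_, ?_⟩
    · constructor
      intro n hn g
      rw [Subgroup.mem_subgroupOf] at hn ⊢
      obtain ⟨hns, hnr⟩ := mem_genStab_iff.1 hn
      obtain ⟨hgs, hgr⟩ := mem_genStab_iff.1 g.2
      show ((g : M ≃[L] M) * (n : M ≃[L] M) * ((g : M ≃[L] M))⁻¹) ∈ genStab L M K L₁
      have hmem : ((g : M ≃[L] M) * (n : M ≃[L] M) * ((g : M ≃[L] M))⁻¹) ∈ sstab L M K :=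
        mul_mem (mul_mem hgs hns) (inv_mem hgs)
      refine mem_genStab_iff.2 ⟨hmem, ?_⟩
      have he : (⟨(g : M ≃[L] M) * (n : M ≃[L] M) * ((g : M ≃[L] M))⁻¹, hmem⟩ :
            sstab L M K) =
          ⟨(g : M ≃[L] M), hgs⟩ * ⟨(n : M ≃[L] M), hns⟩ *
            (⟨(g : M ≃[L] M), hgs⟩ : sstab L M K)⁻¹ := rfl
      rw [he, map_mul, map_mul, map_inv]
      have h' := hnorm12.conj_mem ⟨resHom K ⟨(n : M ≃[L] M), hns⟩, hle12 hnr⟩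
        (Subgroup.mem_subgroupOf.2 hnr) ⟨resHom K ⟨(g : M ≃[L] M), hgs⟩, hgr⟩
      rw [Subgroup.mem_subgroupOf] at h'
      exact h'
    · have hp1 : pstab L M K ≤ genStab L M K L₁ := pstab_le_genStab K L₁
      have hs2 : genStab L M K L₂ ≤ sstab L M K := genStab_le_sstab K L₂
      have base := relindex_pstab_sstab_ne_zero (L := L) (M := M) (K := K) hfin
      intro h0
      have e2 := Subgroup.relIndex_mul_relIndex (pstab L M K) (genStab L M K L₁)
        (genStab L M K L₂) hp1 hle
      have e1 := Subgroup.relIndex_mul_relIndex (pstab L M K) (genStab L M K L₂)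
        (sstab L M K) (hp1.trans hle) hs2
      apply base
      rw [← e1, ← e2, h0, mul_zero, zero_mul]

end Paper
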